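/- For an open monitor m in open normal form and a trace s, if m →^s x + m_s for some monitor m_s and variable x, then E_v ⊢ m = m' + s.x for some monitor m' such that m' does not admit any transition m' →^s x + m'' (for any m''). -/

import Mathlib

/-- Recursion-free regular monitors (with variables). -/
inductive Mon (Act : Type) : Type
  | end_ : Mon Act
  | yes : Mon Act
  | no : Mon Act
  | act : Act → Mon Act → Mon Act
  | plus : Mon Act → Mon Act → Mon Act
  | var : ℕ → Mon Act

variable {Act : Type}

/-- Verdicts: `end`, `yes`, `no`. -/
inductive IsVerdict : Mon Act → Prop
  | end_ : IsVerdict Mon.end_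
  | yes : IsVerdict Mon.yes
  | no : IsVerdict Mon.no

/-- Labelled transition relation; `none` is the silent action τ. -/
inductive Step : Mon Act → Option Act → Mon Act → Prop
  | act (a : Act) (m : Mon Act) : Step (Mon.act a m) (some a) m
  | plusL {m n m' : Mon Act} {α : Option Act} : Step m α m' → Step (Mon.plus m n) α m'
  | plusR {m n n' : Mon Act} {α : Option Act} : Step n α n' → Step (Mon.plus m n) α n'
  | verdict {v : Mon Act} {α : Option Act} : IsVerdict v → Step v α v

/-- Reflexive-transitive closure of τ-steps. -/
def TauStar (m n : Mon Act) : Prop :=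
  Relation.ReflTransGen (fun p q => Step p none q) m n

/-- Strong transition along a finite trace. -/
inductive Trace : Mon Act → List Act → Mon Act → Prop
  | refl (m : Mon Act) : Trace m [] m
  | cons {m m' m'' : Mon Act} {a : Act} {s : List Act} :
      Step m (some a) m' → Trace m' s m'' → Trace m (a :: s) m''

/-- Weak transition along a finite trace (τ-steps allowed throughout). -/
inductive WTrace : Mon Act → List Act → Mon Act → Prop
  | nil {m m' : Mon Act} : TauStar m m' → WTrace m [] m'
  | cons {m m₁ m₂ m' : Mon Act} {a : Act} {s : List Act} :
      TauStar m m₁ → Step m₁ (some a) m₂ → WTrace m₂ s m' → WTrace m (a :: s) m'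

/-- Acceptance language. -/
def La (m : Mon Act) : Set (List Act) := {s | WTrace m s Mon.yes}

/-- Rejection language. -/
def Lr (m : Mon Act) : Set (List Act) := {s | WTrace m s Mon.no}

/-- Verdict equivalence. -/
def VerdEq (m n : Mon Act) : Prop := La m = La n ∧ Lr m = Lr n

/-- `A · Act^ω`: infinite words having a finite prefix in `A`. -/
def omegaCl (A : Set (List Act)) : Set (ℕ → Act) :=
  {w | ∃ n : ℕ, (List.range n).map w ∈ A}

/-- ω-verdict equivalence. -/
def OmegaEq (m n : Mon Act) : Prop :=
  omegaCl (La m) = omegaCl (La n) ∧ omegaCl (Lr m) = omegaCl (Lr n)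

/-- Closed monitors: no variables. -/
def Closed : Mon Act → Prop
  | Mon.act _ m => Closed m
  | Mon.plus m n => Closed m ∧ Closed n
  | Mon.var _ => False
  | _ => True

/-- `yes` occurs as a subterm. -/
def HasYes : Mon Act → Prop
  | Mon.yes => True
  | Mon.act _ m => HasYes m
  | Mon.plus m n => HasYes m ∨ HasYes n
  | _ => False

/-- `no` occurs as a subterm. -/
def HasNo : Mon Act → Prop
  | Mon.no => True
  | Mon.act _ m => HasNo m
  | Mon.plus m n => HasNo m ∨ HasNo n
  | _ => False

/-- Syntactic depth. -/
def depth : Mon Act → ℕ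
  | Mon.act _ m => depth m + 1
  | Mon.plus m n => max (depth m) (depth n)
  | _ => 0

/-- Applying a substitution. -/
def msubst (σ : ℕ → Mon Act) : Mon Act → Mon Act
  | Mon.var x => σ x
  | Mon.act a m => Mon.act a (msubst σ m)
  | Mon.plus m n => Mon.plus (msubst σ m) (msubst σ n)
  | m => m

/-- Equational derivability from an axiom set `E`. -/
inductive Deriv (E : Mon Act → Mon Act → Prop) : Mon Act → Mon Act → Prop
  | ax {m n} : E m n → Deriv E m n
  | refl (m) : Deriv E m m
  | symm {m n} : Deriv E m n → Deriv E n m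
  | trans {m n p} : Deriv E m n → Deriv E n p → Deriv E m p
  | act (a : Act) {m n} : Deriv E m n → Deriv E (Mon.act a m) (Mon.act a n)
  | plus {m m' n n'} : Deriv E m m' → Deriv E n n' → Deriv E (Mon.plus m n) (Mon.plus m' n')
  | subst (σ : ℕ → Mon Act) {m n} : Deriv E m n → Deriv E (msubst σ m) (msubst σ n)

def vx : Mon Act := Mon.var 0
def vy : Mon Act := Mon.var 1
def vz : Mon Act := Mon.var 2

/-- The axiom system `E_v`. -/
inductive EvAx : Mon Act → Mon Act → Prop
  | A1 : EvAx (Mon.plus vx vy) (Mon.plus vy vx)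
  | A2 : EvAx (Mon.plus vx (Mon.plus vy vz)) (Mon.plus (Mon.plus vx vy) vz)
  | A3 : EvAx (Mon.plus vx vx) vx
  | A4 : EvAx (Mon.plus vx Mon.end_) vx
  | Ea (a : Act) : EvAx (Mon.act a Mon.end_) Mon.end_
  | Ya (a : Act) : EvAx Mon.yes (Mon.plus Mon.yes (Mon.act a Mon.yes))
  | Na (a : Act) : EvAx Mon.no (Mon.plus Mon.no (Mon.act a Mon.no))
  | Da (a : Act) : EvAx (Mon.act a (Mon.plus vx vy)) (Mon.plus (Mon.act a vx) (Mon.act a vy))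

/-- Sum of a list of monitors (`end` for the empty sum). -/
def sumList : List (Mon Act) → Mon Act
  | [] => Mon.end_
  | [m] => m
  | m :: ms => Mon.plus m (sumList ms)

/-- `s.m`: the monitor performing exactly the actions of `s` and then behaving as `m`. -/
def prefixMon (s : List Act) (m : Mon Act) : Mon Act :=
  List.foldr Mon.act m s

/-- Build `Σ_{(a,m)∈l} a.m [+ yes] [+ no]`. -/
def buildNF (l : List (Act × Mon Act)) (hy hn : Bool) : Mon Act :=
  sumList (l.map (fun p => Mon.act p.1 p.2) ++
    (if hy then [Mon.yes] else []) ++ (if hn then [Mon.no] else []))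

/-- Normal forms for closed monitors. -/
inductive NF : Mon Act → Prop
  | mk (l : List (Act × Mon Act)) (hy hn : Bool) :
      (l.map Prod.fst).Nodup →
      (∀ p ∈ l, p.2 ≠ Mon.end_) →
      (∀ p ∈ l, NF p.2) →
      NF (buildNF l hy hn)

/-- Build `Σ_{(a,m)∈l} a.m + Σ_{x∈vs} x [+ yes] [+ no]`. -/
def buildONF (l : List (Act × Mon Act)) (vs : List ℕ) (hy hn : Bool) : Mon Act :=
  sumList (l.map (fun p => Mon.act p.1 p.2) ++ vs.map Mon.var ++
    (if hy then [Mon.yes] else []) ++ (if hn then [Mon.no] else []))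

/-- Open normal forms. -/
inductive ONF : Mon Act → Prop
  | mk (l : List (Act × Mon Act)) (vs : List ℕ) (hy hn : Bool) :
      (l.map Prod.fst).Nodup → vs.Nodup →
      (∀ p ∈ l, p.2 ≠ Mon.end_) →
      (∀ p ∈ l, ONF p.2) →
      ONF (buildONF l vs hy hn)

/-- `s^i`: the `i`-fold concatenation of `s`. -/
def spow (s : List Act) (i : ℕ) : List Act := (List.replicate i s).flatten

/-- All traces of length exactly `n` over the alphabet listed by `L`. -/
def tuples (L : List Act) : ℕ → List (List Act)
  | 0 => [[]]
  | n + 1 => (tuples L n).flatMap (fun t => L.map (fun a => a :: t))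

/-- All traces of length at most `n`. -/
def allUpTo (L : List Act) (n : ℕ) : List (List Act) :=
  (List.range (n + 1)).flatMap (tuples L)

/-- `s̄^≤(m)`: sum of `s'.m` over traces `s'` with `|s'| ≤ |s|` that are not prefixes of `s`. -/
def sbarLe [DecidableEq Act] (L : List Act) (s : List Act) (m : Mon Act) : Mon Act :=
  sumList (((allUpTo L s.length).filter (fun t => !(t.isPrefixOf s))).map
    (fun t => prefixMon t m))

/-- `s̄(m) = s̄^≤(m) + s.Σ_{a∈Act} a.m`. -/
def sbar [DecidableEq Act] (L : List Act) (s : List Act) (m : Mon Act) : Mon Act :=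
  Mon.plus (sbarLe L s m) (prefixMon s (sumList (L.map fun a => Mon.act a m)))

/-- `s̄^(k)(m)`. -/
def sbarK [DecidableEq Act] (L : List Act) (s : List Act) (m : Mon Act) : ℕ → Mon Act
  | 0 => sbar L s m
  | 1 => sbar L s m
  | k + 2 =>
      Mon.plus
        (sumList ((List.range k).map (fun i => prefixMon (spow s (i + 1)) (sbarLe L s m))))
        (prefixMon (spow s (k + 1)) (sbar L s m))


section Aux16

lemma dcomm (m n : Mon Act) : Deriv EvAx (Mon.plus m n) (Mon.plus n m) := by
  have h := Deriv.subst (E := EvAx) (fun i => if i = 0 then m else n) (Deriv.ax EvAx.A1)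
  simpa [msubst, vx, vy] using h

lemma dassoc (m n p : Mon Act) :
    Deriv EvAx (Mon.plus m (Mon.plus n p)) (Mon.plus (Mon.plus m n) p) := by
  have h := Deriv.subst (E := EvAx)
    (fun i => if i = 0 then m else if i = 1 then n else p) (Deriv.ax EvAx.A2)
  simpa [msubst, vx, vy, vz] using h

lemma dend (m : Mon Act) : Deriv EvAx (Mon.plus m Mon.end_) m := by
  have h := Deriv.subst (E := EvAx) (fun _ => m) (Deriv.ax EvAx.A4)
  simpa [msubst, vx] using h

lemma dDa (a : Act) (m n : Mon Act) :
    Deriv EvAx (Mon.act a (Mon.plus m n)) (Mon.plus (Mon.act a m) (Mon.act a n)) := by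
  have h := Deriv.subst (E := EvAx) (fun i => if i = 0 then m else n) (Deriv.ax (EvAx.Da a))
  simpa [msubst, vx, vy] using h

lemma sumList_cons₂ (m x : Mon Act) (t : List (Mon Act)) :
    sumList (m :: x :: t) = Mon.plus m (sumList (x :: t)) := rfl

lemma dsum_cons (m : Mon Act) (L : List (Mon Act)) :
    Deriv EvAx (sumList (m :: L)) (Mon.plus m (sumList L)) := by
  cases L with
  | nil => exact Deriv.symm (dend m)
  | cons x t => exact Deriv.refl _

lemma dsum_append (A B : List (Mon Act)) :
    Deriv EvAx (sumList (A ++ B)) (Mon.plus (sumList A) (sumList B)) := by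
  induction A with
  | nil =>
      exact Deriv.symm (Deriv.trans (dcomm _ _) (dend _))
  | cons m A' ih =>
      refine Deriv.trans (dsum_cons m (A' ++ B)) ?_
      refine Deriv.trans (Deriv.plus (Deriv.refl m) ih) ?_
      refine Deriv.trans (dassoc _ _ _) ?_
      exact Deriv.plus (Deriv.symm (dsum_cons m A')) (Deriv.refl _)

lemma dsum_congr_mid {e e' : Mon Act} (A B : List (Mon Act)) (h : Deriv EvAx e e') :
    Deriv EvAx (sumList (A ++ e :: B)) (sumList (A ++ e' :: B)) := by
  refine Deriv.trans (dsum_append A (e :: B)) (Deriv.trans ?_ (Deriv.symm (dsum_append A (e' :: B))))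
  exact Deriv.plus (Deriv.refl _)
    (Deriv.trans (dsum_cons e B)
      (Deriv.trans (Deriv.plus h (Deriv.refl _)) (Deriv.symm (dsum_cons e' B))))

lemma dswap (p q r : Mon Act) :
    Deriv EvAx (Mon.plus (Mon.plus p q) r) (Mon.plus (Mon.plus p r) q) :=
  Deriv.trans (Deriv.symm (dassoc p q r))
    (Deriv.trans (Deriv.plus (Deriv.refl p) (dcomm q r)) (dassoc p r q))

lemma dextract (A B : List (Mon Act)) (p q : Mon Act) :
    Deriv EvAx (sumList (A ++ Mon.plus p q :: B)) (Mon.plus (sumList (A ++ p :: B)) q) := by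
  refine Deriv.trans (dsum_append A _) ?_
  refine Deriv.trans (Deriv.plus (Deriv.refl _)
    (Deriv.trans (dsum_cons _ B) (dswap p q (sumList B)))) ?_
  refine Deriv.trans (dassoc _ _ _) ?_
  exact Deriv.plus
    (Deriv.symm (Deriv.trans (dsum_append A (p :: B))
      (Deriv.plus (Deriv.refl _) (dsum_cons p B)))) (Deriv.refl q)

lemma step_act {a b : Act} {q n : Mon Act} (h : Step (Mon.act b q) (some a) n) :
    b = a ∧ n = q := by
  cases h with
  | act => exact ⟨rfl, rfl⟩
  | verdict hv => cases hv

lemma step_var {y : ℕ} {α : Option Act} {n : Mon Act} : ¬ Step (Mon.var y : Mon Act) α n := by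
  intro h
  cases h with
  | verdict hv => cases hv

lemma trace_nil {m n : Mon Act} (h : Trace m [] n) : m = n := by cases h; rfl

lemma trace_verdict : ∀ {v : Mon Act} {s : List Act} {n : Mon Act},
    Trace v s n → IsVerdict v → n = v := by
  intro v s n h
  induction h with
  | refl => intro _; rfl
  | cons hstep ht ih =>
      intro hv
      cases hv with
      | end_ => cases hstep with | verdict _ => exact ih IsVerdict.end_
      | yes => cases hstep with | verdict _ => exact ih IsVerdict.yes
      | no => cases hstep with | verdict _ => exact ih IsVerdict.no

lemma step_sumList : ∀ {L : List (Mon Act)} {α : Option Act} {n : Mon Act},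
    Step (sumList L) α n → (∃ e ∈ L, Step e α n) ∨ (L = [] ∧ n = Mon.end_) := by
  intro L
  induction L with
  | nil =>
      intro α n h
      cases h with
      | verdict hv => exact Or.inr ⟨rfl, rfl⟩
  | cons m t ih =>
      intro α n h
      cases t with
      | nil => exact Or.inl ⟨m, by simp, h⟩
      | cons x t' =>
          rw [sumList_cons₂] at h
          cases h with
          | plusL h' => exact Or.inl ⟨m, by simp, h'⟩
          | plusR h' =>
              rcases ih h' with ⟨e, he, hs⟩ | ⟨h1, _⟩
              · exact Or.inl ⟨e, by simp [he], hs⟩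
              · simp at h1
          | verdict hv => cases hv

lemma sumList_eq_plus {L : List (Mon Act)} {p q : Mon Act}
    (hL : ∀ e ∈ L, ∀ u v, e ≠ Mon.plus u v)
    (h : sumList L = Mon.plus p q) : ∃ t, L = p :: t ∧ t ≠ [] ∧ q = sumList t := by
  match L with
  | [] => exact absurd h (by simp [sumList])
  | [e] => exact absurd h (hL e (by simp) p q)
  | e :: x :: t =>
      rw [sumList_cons₂] at h
      injection h with h1 h2
      exact ⟨x :: t, by rw [h1], by simp, h2.symm⟩

end Aux16

section Main16

lemma step_verdict {v : Mon Act} {α : Option Act} {n : Mon Act}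
    (hv : IsVerdict v) (h : Step v α n) : n = v := by
  cases hv with
  | end_ => cases h with | verdict _ => rfl
  | yes => cases h with | verdict _ => rfl
  | no => cases h with | verdict _ => rfl

lemma mem_tail_list {vs : List ℕ} {hy hn : Bool} {e : Mon Act}
    (he : e ∈ (vs.map Mon.var ++ (if hy then [Mon.yes] else []) ++
      (if hn then [Mon.no] else []) : List (Mon Act))) :
    (∃ y ∈ vs, e = Mon.var y) ∨ e = Mon.yes ∨ e = Mon.no := by
  rcases List.mem_append.mp he with h | h
  · rcases List.mem_append.mp h with h | h
    · obtain ⟨y, hy', rfl⟩ := List.mem_map.mp h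
      exact Or.inl ⟨y, hy', rfl⟩
    · split at h
      · simp at h; exact Or.inr (Or.inl h)
      · simp at h
  · split at h
    · simp at h; exact Or.inr (Or.inr h)
    · simp at h

lemma mem_onf_list {l : List (Act × Mon Act)} {vs : List ℕ} {hy hn : Bool} {e : Mon Act}
    (he : e ∈ (l.map (fun p => Mon.act p.1 p.2) ++ vs.map Mon.var ++
      (if hy then [Mon.yes] else []) ++ (if hn then [Mon.no] else []) : List (Mon Act))) :
    (∃ p ∈ l, e = Mon.act p.1 p.2) ∨ (∃ y ∈ vs, e = Mon.var y) ∨ e = Mon.yes ∨ e = Mon.no := by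
  have he' : e ∈ l.map (fun p => Mon.act p.1 p.2) ++ (vs.map Mon.var ++
      (if hy then [Mon.yes] else []) ++ (if hn then [Mon.no] else [])) := by
    simpa [List.append_assoc] using he
  rcases List.mem_append.mp he' with h | h
  · obtain ⟨p, hp, rfl⟩ := List.mem_map.mp h
    exact Or.inl ⟨p, hp, rfl⟩
  · exact Or.inr (mem_tail_list h)

lemma onf_no_plus {l : List (Act × Mon Act)} {vs : List ℕ} {hy hn : Bool} :
    ∀ e ∈ (l.map (fun p => Mon.act p.1 p.2) ++ vs.map Mon.var ++
      (if hy then [Mon.yes] else []) ++ (if hn then [Mon.no] else []) : List (Mon Act)),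
      ∀ u v, e ≠ Mon.plus u v := by
  intro e he u v
  rcases mem_onf_list he with ⟨p, _, rfl⟩ | ⟨y, _, rfl⟩ | rfl | rfl <;> simp

lemma tail_no_plus {vs : List ℕ} {hy hn : Bool} :
    ∀ e ∈ (vs.map Mon.var ++ (if hy then [Mon.yes] else []) ++
      (if hn then [Mon.no] else []) : List (Mon Act)),
      ∀ u v, e ≠ Mon.plus u v := by
  intro e he u v
  rcases mem_tail_list he with ⟨y, _, rfl⟩ | rfl | rfl <;> simp

lemma stmt16_aux (s : List Act) : ∀ (m : Mon Act), ONF m → ∀ (x : ℕ) (m_s : Mon Act),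
    Trace m s (Mon.plus (Mon.var x) m_s) →
    ∃ m' : Mon Act,
      Deriv EvAx m (Mon.plus m' (prefixMon s (Mon.var x))) ∧
      ∀ m'' : Mon Act, ¬ Trace m' s (Mon.plus (Mon.var x) m'') := by
  induction s with
  | nil =>
      intro m hnf x m_s h
      cases hnf with
      | mk l vs hy hn hnd hndv hne honf =>
        have heq : sumList (l.map (fun p => Mon.act p.1 p.2) ++ vs.map Mon.var ++
            (if hy then [Mon.yes] else []) ++ (if hn then [Mon.no] else [])) =
            Mon.plus (Mon.var x) m_s := trace_nil h
        obtain ⟨t, hL1, htne, hms⟩ := sumList_eq_plus onf_no_plus heq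
        subst hms
        cases l with
        | cons p l' => exfalso; simp at hL1
        | nil =>
            cases vs with
            | nil => exfalso; revert hL1; cases hy <;> cases hn <;> simp
            | cons v vs' =>
                simp only [List.map_nil, List.nil_append, List.map_cons, List.cons_append,
                  List.cons.injEq, Mon.var.injEq] at hL1
                obtain ⟨rfl, ht⟩ := hL1
                refine ⟨sumList t, ?_, ?_⟩
                · have : buildONF [] (v :: vs') hy hn = Mon.plus (Mon.var v) (sumList t) := heq
                  rw [this]
                  exact dcomm _ _
                · intro m'' htr
                  have h2 : sumList t = Mon.plus (Mon.var v) m'' := trace_nil htr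
                  rw [← ht] at h2
                  obtain ⟨t', ht1, _, _⟩ := sumList_eq_plus tail_no_plus h2
                  cases vs' with
                  | nil => revert ht1; cases hy <;> cases hn <;> simp
                  | cons v' vs'' =>
                      simp only [List.map_cons, List.cons_append, List.cons.injEq,
                        Mon.var.injEq] at ht1
                      obtain ⟨rfl, _⟩ := ht1
                      simp at hndv
  | cons a s' ih =>
      intro m hnf x m_s h
      cases hnf with
      | mk l vs hy hn hnd hndv hne honf =>
        cases h with
        | cons hstep htr =>
          rcases step_sumList (L := l.map (fun p => Mon.act p.1 p.2) ++ vs.map Mon.var ++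
              (if hy then [Mon.yes] else []) ++ (if hn then [Mon.no] else [])) hstep with
            ⟨e, he, hse⟩ | ⟨_, rfl⟩
          · rcases mem_onf_list he with ⟨p, hp, rfl⟩ | ⟨y, _, rfl⟩ | rfl | rfl
            · obtain ⟨hpa, rfl⟩ := step_act hse
              obtain ⟨m₁', hder, hnt⟩ := ih p.2 (honf p hp) x m_s htr
              obtain ⟨l₁, l₂, rfl⟩ := List.append_of_mem hp
              obtain ⟨b, m₂⟩ := p
              simp only at hpa
              subst hpa
              rw [List.map_append, List.map_cons] at hnd
              have h1 := List.nodup_append'.mp hnd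
              have hnd' : (b ∉ l₁.map Prod.fst) ∧ (b ∉ l₂.map Prod.fst) :=
                ⟨fun hmem => h1.2.2 hmem List.mem_cons_self,
                 (List.nodup_cons.mp h1.2.1).1⟩
              set A := l₁.map (fun p : Act × Mon Act => Mon.act p.1 p.2) with hA
              set B := l₂.map (fun p : Act × Mon Act => Mon.act p.1 p.2) ++ vs.map Mon.var ++
                (if hy then [Mon.yes] else []) ++ (if hn then [Mon.no] else []) with hB
              have hLL : buildONF (l₁ ++ (b, m₂) :: l₂) vs hy hn =
                  sumList (A ++ Mon.act b m₂ :: B) := by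
                simp [buildONF, hA, hB, List.append_assoc]
              refine ⟨sumList (A ++ Mon.act b m₁' :: B), ?_, ?_⟩
              · rw [hLL]
                have d1 : Deriv EvAx (Mon.act b m₂)
                    (Mon.plus (Mon.act b m₁') (Mon.act b (prefixMon s' (Mon.var x)))) :=
                  Deriv.trans (Deriv.act b hder) (dDa b _ _)
                exact Deriv.trans (dsum_congr_mid A B d1) (dextract A B _ _)
              · intro m'' htr'
                cases htr' with
                | cons hst2 htr2 =>
                  rcases step_sumList hst2 with ⟨e, he2, hse2⟩ | ⟨hnil, rfl⟩
                  · rcases List.mem_append.mp he2 with heA | heB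
                    · obtain ⟨p', hp', rfl⟩ := List.mem_map.mp heA
                      obtain ⟨hpa', _⟩ := step_act hse2
                      exact hnd'.1 (hpa' ▸ List.mem_map.mpr ⟨p', hp', rfl⟩)
                    · rcases List.mem_cons.mp heB with rfl | heB'
                      · obtain ⟨_, rfl⟩ := step_act hse2
                        exact hnt m'' htr2
                      · have heB'' : e ∈ l₂.map (fun p : Act × Mon Act => Mon.act p.1 p.2) ++
                            (vs.map Mon.var ++ (if hy then [Mon.yes] else []) ++
                              (if hn then [Mon.no] else [])) := by
                          simpa [hB, List.append_assoc] using heB'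
                        rcases List.mem_append.mp heB'' with h2 | h2
                        · obtain ⟨p', hp', rfl⟩ := List.mem_map.mp h2
                          obtain ⟨hpa', _⟩ := step_act hse2
                          exact hnd'.2 (hpa' ▸ List.mem_map.mpr ⟨p', hp', rfl⟩)
                        · rcases mem_tail_list h2 with ⟨y, _, rfl⟩ | rfl | rfl
                          · exact step_var hse2
                          · rw [step_verdict IsVerdict.yes hse2] at htr2
                            exact absurd (trace_verdict htr2 IsVerdict.yes) (by simp)
                          · rw [step_verdict IsVerdict.no hse2] at htr2
                            exact absurd (trace_verdict htr2 IsVerdict.no) (by simp)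
                  · simp at hnil
            · exact absurd hse step_var
            · rw [step_verdict IsVerdict.yes hse] at htr
              exact absurd (trace_verdict htr IsVerdict.yes) (by simp)
            · rw [step_verdict IsVerdict.no hse] at htr
              exact absurd (trace_verdict htr IsVerdict.no) (by simp)
          · exact absurd (trace_verdict htr IsVerdict.end_) (by simp)

end Main16

/-- separation of a variable occurrence in an open normal form. -/
theorem stmt16 (m : Mon Act) (hnf : ONF m) (s : List Act) (x : ℕ) (m_s : Mon Act)
    (h : Trace m s (Mon.plus (Mon.var x) m_s)) :
    ∃ m' : Mon Act,
      Deriv EvAx m (Mon.plus m' (prefixMon s (Mon.var x))) ∧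
      ∀ m'' : Mon Act, ¬ Trace m' s (Mon.plus (Mon.var x) m'') :=
  stmt16_aux s m hnf x m_s h
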